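/- arXiv:2107.05262 — 7 statements merged into one kernel-verified Lean document; each statement's English description precedes it below -/
import Mathlib

section
/- Let L be a positive integer, and let x, p, q : ZMod L → ℝ. Then the second moment satisfies M²(x,p,q) = C_x * D_p * C_xᵀ + C_{s·x} * D_q * C_{s·x}ᵀ, where s·x denotes the reflected signal (s·x)[ℓ] = x[−ℓ]. -/
open scoped BigOperators

/-- Action of the dihedral group on signals indexed by `ZMod L`.
In Mathlib's convention `DihedralGroup.sr k = s * r^k`, so the element `r^k * s`
of the paper is `sr (-k)`.  `r k` acts by the cyclic shift `(r k • x) ℓ = x (ℓ - k)`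
and `sr k = s * r^k = r^(-k) * s` acts by `(sr k • x) ℓ = x (-k - ℓ)`; in particular
`r^k * s = sr (-k)` acts by `ℓ ↦ x (k - ℓ)`, as in the paper. -/
def dihedralAct {L : ℕ} (g : DihedralGroup L) (x : ZMod L → ℝ) : ZMod L → ℝ :=
  match g with
  | .r k => fun ℓ => x (ℓ - k)
  | .sr k => fun ℓ => x (-k - ℓ)

/-- The first moment `M¹(x,p,q) = Σ_k p[k] (r^k · x) + Σ_k q[k] (r^k s · x)`. -/
noncomputable def M1 {L : ℕ} [NeZero L] (x p q : ZMod L → ℝ) : ZMod L → ℝ :=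
  fun ℓ => (∑ k : ZMod L, p k * x (ℓ - k)) + ∑ k : ZMod L, q k * x (k - ℓ)

/-- The second moment
`M²(x,p,q) = Σ_k p[k] (r^k · x)(r^k · x)ᵀ + Σ_k q[k] (r^k s · x)(r^k s · x)ᵀ`. -/
noncomputable def M2 {L : ℕ} [NeZero L] (x p q : ZMod L → ℝ) :
    Matrix (ZMod L) (ZMod L) ℝ :=
  Matrix.of fun i j =>
    (∑ k : ZMod L, p k * x (i - k) * x (j - k)) + ∑ k : ZMod L, q k * x (k - i) * x (k - j)

open Matrix in
/-- `M²(x,p,q) = C_x * D_p * C_xᵀ + C_{s·x} * D_q * C_{s·x}ᵀ`,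
where `(s·x)[ℓ] = x[-ℓ]`. -/
theorem second_moment_circulant (L : ℕ) [NeZero L] (x p q : ZMod L → ℝ) :
    M2 x p q = Matrix.circulant x * Matrix.diagonal p * (Matrix.circulant x)ᵀ
        + Matrix.circulant (fun ℓ => x (-ℓ)) * Matrix.diagonal q
          * (Matrix.circulant (fun ℓ => x (-ℓ)))ᵀ := by
  ext i j
  simp only [M2, Matrix.of_apply, Matrix.add_apply, Matrix.mul_apply,
    Matrix.diagonal_apply, Matrix.transpose_apply, Matrix.circulant_apply,
    mul_ite, mul_zero, Finset.sum_ite_eq, Finset.sum_ite_eq', Finset.mem_univ, if_true, neg_sub]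
  congr 1 <;> apply Finset.sum_congr rfl <;> intro k _ <;> ring
end

section
/- Let L be a positive integer and x, p, q : ZMod L → ℝ. Then for every k ∈ ZMod L, the discrete Fourier transform of the first moment satisfies \widehat{M¹(x,p,q)}[k] = p̂[k] · x̂[k] + q̂[k] · x̂[−k]. -/
open scoped BigOperators

/-- The (unnormalized) discrete Fourier transform
`ẑ[k] = Σ_ℓ z[ℓ] exp(-2πi k ℓ / L)`. -/
noncomputable def dft {L : ℕ} [NeZero L] (z : ZMod L → ℂ) : ZMod L → ℂ :=
  fun k => ∑ ℓ : ZMod L,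
    z ℓ * Complex.exp (-2 * Real.pi * Complex.I * ((k.val : ℂ) * (ℓ.val : ℂ)) / (L : ℂ))

/-- The DFT of a real signal (hat of its complexification). -/
noncomputable def dftR {L : ℕ} [NeZero L] (z : ZMod L → ℝ) : ZMod L → ℂ :=
  dft fun ℓ => (z ℓ : ℂ)

noncomputable def EE (L : ℕ) (m : ℤ) : ℂ :=
  Complex.exp (-2 * Real.pi * Complex.I * (m : ℂ) / (L : ℂ))

lemma EE_add (L : ℕ) (m n : ℤ) : EE L (m + n) = EE L m * EE L n := by
  rw [EE, EE, EE, ← Complex.exp_add]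
  congr 1
  push_cast
  ring

lemma EE_congr (L : ℕ) [NeZero L] {m n : ℤ} (h : (m : ZMod L) = (n : ZMod L)) :
    EE L m = EE L n := by
  have hd : (L : ℤ) ∣ n - m := by
    have := (ZMod.intCast_eq_intCast_iff' m n L).mp h
    exact Int.ModEq.dvd this
  obtain ⟨t, ht⟩ := hd
  have hn : n = m + L * t := by linarith
  have h1 : EE L ((L : ℤ) * t) = 1 := by
    have hL : (L : ℂ) ≠ 0 := Nat.cast_ne_zero.mpr (NeZero.ne L)
    rw [EE]
    have : (-2 * Real.pi * Complex.I * (((L : ℤ) * t : ℤ) : ℂ) / (L : ℂ))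
        = ((-t : ℤ) : ℂ) * (2 * Real.pi * Complex.I) := by
      push_cast
      field_simp
    rw [this, Complex.exp_int_mul_two_pi_mul_I]
  rw [hn, EE_add, h1, mul_one]

lemma EE_val_add (L : ℕ) [NeZero L] (k a b : ZMod L) :
    EE L (k.val * (a + b).val) = EE L (k.val * a.val) * EE L (k.val * b.val) := by
  rw [← EE_add]
  apply EE_congr
  push_cast [ZMod.natCast_val, ZMod.cast_id]
  ring

lemma EE_val_sub (L : ℕ) [NeZero L] (k a b : ZMod L) :
    EE L (k.val * (a - b).val) = EE L (k.val * a.val) * EE L ((-k).val * b.val) := by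
  rw [← EE_add]
  apply EE_congr
  push_cast [ZMod.natCast_val, ZMod.cast_id]
  ring

lemma dftR_eq (L : ℕ) [NeZero L] (z : ZMod L → ℝ) (k : ZMod L) :
    dftR z k = ∑ ℓ : ZMod L, (z ℓ : ℂ) * EE L (k.val * ℓ.val) := by
  unfold dftR dft EE
  refine Finset.sum_congr rfl fun ℓ _ => ?_
  push_cast
  ring_nf

/-- `M¹(x,p,q)^[k] = p̂[k]·x̂[k] + q̂[k]·x̂[-k]`. -/
theorem first_moment_dft (L : ℕ) [NeZero L] (x p q : ZMod L → ℝ) (k : ZMod L) :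
    dftR (M1 x p q) k = dftR p k * dftR x k + dftR q k * dftR x (-k) := by
  rw [dftR_eq, dftR_eq, dftR_eq, dftR_eq, dftR_eq]
  have expand : ∀ ℓ : ZMod L, ((M1 x p q ℓ : ℝ) : ℂ) * EE L (k.val * ℓ.val)
      = (∑ j : ZMod L, (p j : ℂ) * (x (ℓ - j) : ℂ) * EE L (k.val * ℓ.val))
        + ∑ j : ZMod L, (q j : ℂ) * (x (j - ℓ) : ℂ) * EE L (k.val * ℓ.val) := by
    intro ℓ
    simp only [M1]
    push_cast
    rw [add_mul, Finset.sum_mul, Finset.sum_mul]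
  rw [Finset.sum_congr rfl fun ℓ _ => expand ℓ, Finset.sum_add_distrib]
  congr 1
  · rw [Finset.sum_comm]
    rw [Finset.sum_mul_sum]
    refine Finset.sum_congr rfl fun j _ => ?_
    rw [show (∑ ℓ : ZMod L, (p j : ℂ) * (x (ℓ - j) : ℂ) * EE L (k.val * ℓ.val))
        = ∑ m : ZMod L, (p j : ℂ) * (x m : ℂ) * EE L (k.val * (m + j).val) from
      Fintype.sum_equiv (Equiv.subRight j) _ _ (fun ℓ => by
        simp only [Equiv.subRight_apply, sub_add_cancel])]
    refine Finset.sum_congr rfl fun m _ => ?_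
    rw [EE_val_add]
    ring
  · rw [Finset.sum_comm]
    rw [Finset.sum_mul_sum]
    refine Finset.sum_congr rfl fun j _ => ?_
    rw [show (∑ ℓ : ZMod L, (q j : ℂ) * (x (j - ℓ) : ℂ) * EE L (k.val * ℓ.val))
        = ∑ m : ZMod L, (q j : ℂ) * (x m : ℂ) * EE L (k.val * (j - m).val) from
      Fintype.sum_equiv (Equiv.subLeft j) _ _ (fun ℓ => by
        simp only [Equiv.subLeft_apply, sub_sub_cancel])]
    refine Finset.sum_congr rfl fun m _ => ?_
    rw [EE_val_sub]
    ring
end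

section
/- Let L be a positive integer and x, p, q : ZMod L → ℝ. Then for all i, j ∈ ZMod L, the (i,j) entry of the conjugated second moment F · M²(x,p,q) · F^H satisfies Σ_{a,b} exp(−2πi·i·a/L) · M²(x,p,q)[a,b] · exp(2πi·j·b/L) = p̂[i−j] · x̂[i] · x̂[−j] + q̂[i−j] · x̂[−i] · x̂[j]. -/
open scoped BigOperators

noncomputable def ee (L : ℕ) [NeZero L] : ZMod L → ℂ :=
  fun z => Complex.exp (-2 * Real.pi * Complex.I / L) ^ z.val

lemma ee_int (L : ℕ) [NeZero L] (n : ℤ) :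
    Complex.exp (-2 * Real.pi * Complex.I / L) ^ n = ee L (n : ZMod L) := by
  set ω := Complex.exp (-2 * Real.pi * Complex.I / L) with hωdef
  have hω : ω ≠ 0 := Complex.exp_ne_zero _
  have hL0 : (L : ℂ) ≠ 0 := Nat.cast_ne_zero.mpr (NeZero.ne L)
  have hL : ω ^ (L : ℤ) = 1 := by
    rw [hωdef, zpow_natCast, ← Complex.exp_nat_mul]
    have h2 : (L : ℂ) * (-2 * Real.pi * Complex.I / L) = (-1 : ℤ) * (2 * Real.pi * Complex.I) := by
      field_simp; ring
    rw [h2, Complex.exp_int_mul_two_pi_mul_I]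
  have hval : (((n : ZMod L)).val : ℤ) = n % L := ZMod.val_intCast n
  have hsplit : ω ^ n = ω ^ (n % L) * (ω ^ (L : ℤ)) ^ (n / L) := by
    rw [← zpow_mul, ← zpow_add₀ hω, Int.emod_add_mul_ediv]
  rw [hsplit, hL, one_zpow, mul_one, ← hval, zpow_natCast]
  rfl

lemma ee_add (L : ℕ) [NeZero L] (a b : ZMod L) :
    ee L (a + b) = ee L a * ee L b := by
  have h1 : ee L a = Complex.exp (-2 * Real.pi * Complex.I / L) ^ ((a.val : ℤ)) := by
    rw [zpow_natCast]; rfl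
  have h2 : ee L b = Complex.exp (-2 * Real.pi * Complex.I / L) ^ ((b.val : ℤ)) := by
    rw [zpow_natCast]; rfl
  have h3 : ee L (a + b) = Complex.exp (-2 * Real.pi * Complex.I / L) ^ ((a.val : ℤ) + b.val) := by
    rw [ee_int]
    congr 1
    push_cast
    simp [ZMod.natCast_val, ZMod.cast_id]
  rw [h3, zpow_add₀ (Complex.exp_ne_zero _), h1, h2]

lemma ee_zero (L : ℕ) [NeZero L] : ee L 0 = 1 := by
  simp [ee]

lemma ee_neg (L : ℕ) [NeZero L] (a : ZMod L) : ee L (-a) = (ee L a)⁻¹ := by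
  have h : ee L a * ee L (-a) = 1 := by rw [← ee_add]; simp [ee_zero]
  have ha : ee L a ≠ 0 := by
    intro h0; rw [h0, zero_mul] at h; exact one_ne_zero h.symm
  field_simp at h ⊢
  linear_combination h

lemma ee_nat (L : ℕ) [NeZero L] (m : ℕ) :
    Complex.exp (-2 * Real.pi * Complex.I * m / L) = ee L (m : ZMod L) := by
  have h : -2 * Real.pi * Complex.I * m / L = m * (-2 * Real.pi * Complex.I / L) := by ring
  rw [h, Complex.exp_nat_mul, ← zpow_natCast, ee_int]
  push_cast; ring_nf

lemma ee_nat_neg (L : ℕ) [NeZero L] (m : ℕ) :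
    Complex.exp (2 * Real.pi * Complex.I * m / L) = ee L (-(m : ZMod L)) := by
  have h : (2 : ℂ) * Real.pi * Complex.I * m / L = -(-2 * Real.pi * Complex.I * m / L) := by ring
  rw [h, Complex.exp_neg, ee_nat, ee_neg]

lemma ee_mulval (L : ℕ) [NeZero L] (k ℓ : ZMod L) :
    Complex.exp (-2 * Real.pi * Complex.I * ((k.val : ℂ) * (ℓ.val : ℂ)) / (L : ℂ)) = ee L (k * ℓ) := by
  have h := ee_nat L (k.val * ℓ.val)
  push_cast at h
  rw [h]
  congr 1
  simp [ZMod.natCast_val, ZMod.cast_id]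

lemma ee_mulval_neg (L : ℕ) [NeZero L] (k ℓ : ZMod L) :
    Complex.exp (2 * Real.pi * Complex.I * ((k.val : ℂ) * (ℓ.val : ℂ)) / (L : ℂ)) = ee L (-(k * ℓ)) := by
  have h := ee_nat_neg L (k.val * ℓ.val)
  push_cast at h
  rw [h]
  congr 2
  simp [ZMod.natCast_val, ZMod.cast_id]

lemma dftR_ee {L : ℕ} [NeZero L] (z : ZMod L → ℝ) (k : ZMod L) :
    dftR z k = ∑ ℓ : ZMod L, (z ℓ : ℂ) * ee L (k * ℓ) := by
  unfold dftR dft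
  exact Finset.sum_congr rfl fun ℓ _ => by rw [ee_mulval]

lemma tri_sum {L : ℕ} [NeZero L] (f g h : ZMod L → ℂ) :
    (∑ k : ZMod L, f k) * (∑ a : ZMod L, g a) * (∑ b : ZMod L, h b)
      = ∑ k : ZMod L, ∑ a : ZMod L, ∑ b : ZMod L, f k * g a * h b := by
  rw [Finset.sum_mul_sum, Finset.sum_mul_sum]
  exact Finset.sum_congr rfl fun k _ => by
    simp only [Finset.sum_mul]
    exact Finset.sum_comm

lemma swap3 {L : ℕ} [NeZero L] (t : ZMod L → ZMod L → ZMod L → ℂ) :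
    (∑ a : ZMod L, ∑ b : ZMod L, ∑ k : ZMod L, t k a b)
      = ∑ k : ZMod L, ∑ a : ZMod L, ∑ b : ZMod L, t k a b := by
  have h1 : ∀ a : ZMod L, ∑ b : ZMod L, ∑ k : ZMod L, t k a b = ∑ k : ZMod L, ∑ b : ZMod L, t k a b :=
    fun a => Finset.sum_comm
  simp only [h1]
  exact Finset.sum_comm

/-- the entries of the conjugated second moment `F · M² · F^H` satisfy
`Σ_{a,b} e^{-2πi·i·a/L} M²[a,b] e^{2πi·j·b/L} = p̂[i-j]·x̂[i]·x̂[-j] + q̂[i-j]·x̂[-i]·x̂[j]`. -/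
theorem second_moment_dft (L : ℕ) [NeZero L] (x p q : ZMod L → ℝ) (i j : ZMod L) :
    (∑ a : ZMod L, ∑ b : ZMod L,
        Complex.exp (-2 * Real.pi * Complex.I * ((i.val : ℂ) * (a.val : ℂ)) / (L : ℂ))
          * (M2 x p q a b : ℂ)
          * Complex.exp (2 * Real.pi * Complex.I * ((j.val : ℂ) * (b.val : ℂ)) / (L : ℂ)))
      = dftR p (i - j) * dftR x i * dftR x (-j)
        + dftR q (i - j) * dftR x (-i) * dftR x j := by
  have step1 : (∑ a : ZMod L, ∑ b : ZMod L,
        Complex.exp (-2 * Real.pi * Complex.I * ((i.val : ℂ) * (a.val : ℂ)) / (L : ℂ))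
          * (M2 x p q a b : ℂ)
          * Complex.exp (2 * Real.pi * Complex.I * ((j.val : ℂ) * (b.val : ℂ)) / (L : ℂ)))
      = (∑ a : ZMod L, ∑ b : ZMod L, ∑ k : ZMod L,
          ((p k : ℂ) * ee L ((i-j)*k)) * ((x (a-k) : ℂ) * ee L (i*(a-k))) * ((x (b-k) : ℂ) * ee L (-(j*(b-k)))))
        + (∑ a : ZMod L, ∑ b : ZMod L, ∑ k : ZMod L,
          ((q k : ℂ) * ee L ((i-j)*k)) * ((x (k-a) : ℂ) * ee L (-(i*(k-a)))) * ((x (k-b) : ℂ) * ee L (j*(k-b)))) := by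
    rw [← Finset.sum_add_distrib]
    apply Finset.sum_congr rfl; intro a _
    rw [← Finset.sum_add_distrib]
    apply Finset.sum_congr rfl; intro b _
    rw [ee_mulval, ee_mulval_neg, M2, Matrix.of_apply]
    push_cast
    rw [mul_add, add_mul]
    simp only [Finset.mul_sum, Finset.sum_mul]
    rw [← Finset.sum_add_distrib]
    conv_rhs => rw [← Finset.sum_add_distrib]
    apply Finset.sum_congr rfl; intro k _
    have E1 : ee L ((i-j)*k) * ee L (i*(a-k)) * ee L (-(j*(b-k))) = ee L (i*a) * ee L (-(j*b)) := by
      rw [← ee_add, ← ee_add, ← ee_add]; congr 1; ring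
    have E2 : ee L ((i-j)*k) * ee L (-(i*(k-a))) * ee L (j*(k-b)) = ee L (i*a) * ee L (-(j*b)) := by
      rw [← ee_add, ← ee_add, ← ee_add]; congr 1; ring
    linear_combination (-((x (a-k) : ℂ) * (x (b-k) : ℂ) * (p k : ℂ))) * E1
      - ((x (k-a) : ℂ) * (x (k-b) : ℂ) * (q k : ℂ)) * E2
  rw [step1]
  congr 1
  · rw [swap3, dftR_ee, dftR_ee, dftR_ee, tri_sum]
    apply Finset.sum_congr rfl; intro k _
    have hb : ∀ (c : ℂ), (∑ b : ZMod L, c * ((x (b-k) : ℂ) * ee L (-(j*(b-k)))))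
        = ∑ b : ZMod L, c * ((x b : ℂ) * ee L (-j * b)) := by
      intro c
      exact Fintype.sum_equiv (Equiv.subRight k) _ _ (fun b => by rw [Equiv.subRight_apply, neg_mul])
    calc (∑ a : ZMod L, ∑ b : ZMod L,
          ((p k : ℂ) * ee L ((i-j)*k)) * ((x (a-k) : ℂ) * ee L (i*(a-k))) * ((x (b-k) : ℂ) * ee L (-(j*(b-k)))))
        = ∑ a : ZMod L, ∑ b : ZMod L,
          ((p k : ℂ) * ee L ((i-j)*k)) * ((x (a-k) : ℂ) * ee L (i*(a-k))) * ((x b : ℂ) * ee L (-j * b)) := by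
          exact Finset.sum_congr rfl fun a _ => hb _
      _ = ∑ a : ZMod L, ∑ b : ZMod L,
          ((p k : ℂ) * ee L ((i-j)*k)) * ((x a : ℂ) * ee L (i*a)) * ((x b : ℂ) * ee L (-j * b)) := by
          exact Fintype.sum_equiv (Equiv.subRight k) _ _ (fun a => by rw [Equiv.subRight_apply])
  · rw [swap3, dftR_ee, dftR_ee, dftR_ee, tri_sum]
    apply Finset.sum_congr rfl; intro k _
    have hb : ∀ (c : ℂ), (∑ b : ZMod L, c * ((x (k-b) : ℂ) * ee L (j*(k-b))))
        = ∑ b : ZMod L, c * ((x b : ℂ) * ee L (j * b)) := by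
      intro c
      exact Fintype.sum_equiv (Equiv.subLeft k) _ _ (fun b => by rw [Equiv.subLeft_apply])
    calc (∑ a : ZMod L, ∑ b : ZMod L,
          ((q k : ℂ) * ee L ((i-j)*k)) * ((x (k-a) : ℂ) * ee L (-(i*(k-a)))) * ((x (k-b) : ℂ) * ee L (j*(k-b))))
        = ∑ a : ZMod L, ∑ b : ZMod L,
          ((q k : ℂ) * ee L ((i-j)*k)) * ((x (k-a) : ℂ) * ee L (-(i*(k-a)))) * ((x b : ℂ) * ee L (j * b)) := by
          exact Finset.sum_congr rfl fun a _ => hb _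
      _ = ∑ a : ZMod L, ∑ b : ZMod L,
          ((q k : ℂ) * ee L ((i-j)*k)) * ((x a : ℂ) * ee L (-i * a)) * ((x b : ℂ) * ee L (j * b)) := by
          exact Fintype.sum_equiv (Equiv.subLeft k) _ _ (fun a => by
            rw [Equiv.subLeft_apply, neg_mul])
end

section
/- Let L be a positive integer and x, p, q : ZMod L → ℝ with Σ_k p[k] + Σ_k q[k] = 1. Then for every i ∈ ZMod L, Σ_{a,b} exp(−2πi·i·a/L) · M²(x,p,q)[a,b] · exp(2πi·i·b/L) = |x̂[i]|². In particular, the second moment determines the power spectrum of x. -/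
open scoped BigOperators

private lemma pow_mod_aux {L : ℕ} (v : ℂ) (hv : v ^ L = 1) (m : ℕ) :
    v ^ (m % L) = v ^ m := by
  conv_rhs => rw [← Nat.mod_add_div m L]
  rw [pow_add, pow_mul, hv, one_pow, mul_one]

private lemma pow_val_add_aux {L : ℕ} [NeZero L] (v : ℂ) (hv : v ^ L = 1) (a b : ZMod L) :
    v ^ (a + b).val = v ^ a.val * v ^ b.val := by
  rw [ZMod.val_add, pow_mod_aux v hv, pow_add]

private lemma double_sum_factor {L : ℕ} [NeZero L] (c : ℂ) (A B : ZMod L → ℂ) :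
    ∑ a : ZMod L, ∑ b : ZMod L, c * (A a * B b)
      = c * ((∑ a : ZMod L, A a) * (∑ b : ZMod L, B b)) := by
  calc ∑ a : ZMod L, ∑ b : ZMod L, c * (A a * B b)
      = ∑ a : ZMod L, (c * A a) * (∑ b : ZMod L, B b) := by
        refine Finset.sum_congr rfl fun a _ => ?_
        rw [Finset.mul_sum]
        exact Finset.sum_congr rfl fun b _ => by ring
    _ = c * ((∑ a : ZMod L, A a) * (∑ b : ZMod L, B b)) := by
        rw [← Finset.sum_mul, ← Finset.mul_sum, mul_assoc]

private lemma triple_sum_comm {L : ℕ} [NeZero L] (F : ZMod L → ZMod L → ZMod L → ℂ) :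
    ∑ a : ZMod L, ∑ b : ZMod L, ∑ k : ZMod L, F a b k
      = ∑ k : ZMod L, ∑ a : ZMod L, ∑ b : ZMod L, F a b k := by
  calc ∑ a : ZMod L, ∑ b : ZMod L, ∑ k : ZMod L, F a b k
      = ∑ a : ZMod L, ∑ k : ZMod L, ∑ b : ZMod L, F a b k :=
        Finset.sum_congr rfl fun a _ => Finset.sum_comm
    _ = ∑ k : ZMod L, ∑ a : ZMod L, ∑ b : ZMod L, F a b k := Finset.sum_comm

/-- if the weights sum to one, the diagonal entries of the conjugated
second moment give the power spectrum:
`Σ_{a,b} e^{-2πi·i·a/L} M²[a,b] e^{2πi·i·b/L} = |x̂[i]|²`. -/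
theorem second_moment_power_spectrum (L : ℕ) [NeZero L] (x p q : ZMod L → ℝ)
    (hsum : (∑ k : ZMod L, p k) + ∑ k : ZMod L, q k = 1) (i : ZMod L) :
    (∑ a : ZMod L, ∑ b : ZMod L,
        Complex.exp (-2 * Real.pi * Complex.I * ((i.val : ℂ) * (a.val : ℂ)) / (L : ℂ))
          * (M2 x p q a b : ℂ)
          * Complex.exp (2 * Real.pi * Complex.I * ((i.val : ℂ) * (b.val : ℂ)) / (L : ℂ)))
      = ((‖dftR x i‖ ^ 2 : ℝ) : ℂ) := by
  classical
  have hL : (L : ℂ) ≠ 0 := Nat.cast_ne_zero.2 (NeZero.ne L)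
  set v : ℂ := Complex.exp (-2 * Real.pi * Complex.I * (i.val : ℂ) / L) with hv_def
  set w : ℂ := Complex.exp (2 * Real.pi * Complex.I * (i.val : ℂ) / L) with hw_def
  have hvw : v * w = 1 := by
    rw [hv_def, hw_def, ← Complex.exp_add]
    rw [show (-2 * Real.pi * Complex.I * (i.val : ℂ) / L + 2 * Real.pi * Complex.I * (i.val : ℂ) / L) = 0 by ring]
    exact Complex.exp_zero
  have hvL : v ^ L = 1 := by
    rw [hv_def, ← Complex.exp_nat_mul, mul_comm, div_mul_cancel₀ _ hL]
    rw [show (-2 * Real.pi * Complex.I * (i.val:ℂ)) = ((-(i.val:ℤ) : ℤ) : ℂ) * (2*Real.pi*Complex.I) by push_cast; ring]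
    exact Complex.exp_int_mul_two_pi_mul_I _
  have hwL : w ^ L = 1 := by
    rw [hw_def, ← Complex.exp_nat_mul, mul_comm, div_mul_cancel₀ _ hL]
    rw [show (2 * Real.pi * Complex.I * (i.val:ℂ)) = (((i.val:ℤ) : ℤ) : ℂ) * (2*Real.pi*Complex.I) by push_cast; ring]
    exact Complex.exp_int_mul_two_pi_mul_I _
  have hF : ∀ a : ZMod L,
      Complex.exp (-2 * Real.pi * Complex.I * ((i.val : ℂ) * (a.val : ℂ)) / L) = v ^ a.val := by
    intro a
    rw [hv_def, ← Complex.exp_nat_mul]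
    congr 1
    ring
  have hG : ∀ a : ZMod L,
      Complex.exp (2 * Real.pi * Complex.I * ((i.val : ℂ) * (a.val : ℂ)) / L) = w ^ a.val := by
    intro a
    rw [hw_def, ← Complex.exp_nat_mul]
    congr 1
    ring
  have hFadd : ∀ a b : ZMod L, v ^ (a + b).val = v ^ a.val * v ^ b.val := pow_val_add_aux v hvL
  have hGadd : ∀ a b : ZMod L, w ^ (a + b).val = w ^ a.val * w ^ b.val := pow_val_add_aux w hwL
  have hFG : ∀ a : ZMod L, v ^ a.val * w ^ a.val = 1 := fun a => by
    rw [← mul_pow, hvw, one_pow]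
  have hFneg : ∀ a : ZMod L, v ^ (-a).val = w ^ a.val := by
    intro a
    have h1 : v ^ (-a).val * v ^ a.val = 1 := by
      rw [← hFadd, neg_add_cancel, ZMod.val_zero, pow_zero]
    calc v ^ (-a).val = v ^ (-a).val * (v ^ a.val * w ^ a.val) := by rw [hFG, mul_one]
      _ = (v ^ (-a).val * v ^ a.val) * w ^ a.val := by ring
      _ = w ^ a.val := by rw [h1, one_mul]
  have hGneg : ∀ a : ZMod L, w ^ (-a).val = v ^ a.val := by
    intro a
    have h1 : w ^ (-a).val * w ^ a.val = 1 := by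
      rw [← hGadd, neg_add_cancel, ZMod.val_zero, pow_zero]
    calc w ^ (-a).val = w ^ (-a).val * (v ^ a.val * w ^ a.val) := by rw [hFG, mul_one]
      _ = (w ^ (-a).val * w ^ a.val) * v ^ a.val := by ring
      _ = v ^ a.val := by rw [h1, one_mul]
  have hFsub : ∀ a b : ZMod L, v ^ (a - b).val = v ^ a.val * w ^ b.val := by
    intro a b; rw [sub_eq_add_neg, hFadd, hFneg]
  have hGsub : ∀ a b : ZMod L, w ^ (a - b).val = w ^ a.val * v ^ b.val := by
    intro a b; rw [sub_eq_add_neg, hGadd, hGneg]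
  set X : ℂ := ∑ ℓ : ZMod L, (x ℓ : ℂ) * v ^ ℓ.val with hX_def
  set Y : ℂ := ∑ ℓ : ZMod L, (x ℓ : ℂ) * w ^ ℓ.val with hY_def
  clear_value X Y
  have hX : dftR x i = X := by
    rw [dftR, dft, hX_def]
    exact Finset.sum_congr rfl fun ℓ _ => by rw [hF]
  have hA : ∀ k : ZMod L, (∑ a : ZMod L, v ^ a.val * (x (a - k) : ℂ)) = v ^ k.val * X := by
    intro k
    rw [← Equiv.sum_comp (Equiv.addRight k) (fun a => v ^ a.val * (x (a - k) : ℂ))]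
    simp only [Equiv.coe_addRight, add_sub_cancel_right]
    rw [hX_def, Finset.mul_sum]
    exact Finset.sum_congr rfl fun ℓ _ => by rw [hFadd]; ring
  have hB : ∀ k : ZMod L, (∑ b : ZMod L, w ^ b.val * (x (b - k) : ℂ)) = w ^ k.val * Y := by
    intro k
    rw [← Equiv.sum_comp (Equiv.addRight k) (fun b => w ^ b.val * (x (b - k) : ℂ))]
    simp only [Equiv.coe_addRight, add_sub_cancel_right]
    rw [hY_def, Finset.mul_sum]
    exact Finset.sum_congr rfl fun ℓ _ => by rw [hGadd]; ring
  have hC : ∀ k : ZMod L, (∑ a : ZMod L, v ^ a.val * (x (k - a) : ℂ)) = v ^ k.val * Y := by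
    intro k
    rw [← Equiv.sum_comp (Equiv.subLeft k) (fun a => v ^ a.val * (x (k - a) : ℂ))]
    simp only [Equiv.subLeft_apply, sub_sub_cancel]
    rw [hY_def, Finset.mul_sum]
    exact Finset.sum_congr rfl fun ℓ _ => by rw [hFsub]; ring
  have hD : ∀ k : ZMod L, (∑ b : ZMod L, w ^ b.val * (x (k - b) : ℂ)) = w ^ k.val * X := by
    intro k
    rw [← Equiv.sum_comp (Equiv.subLeft k) (fun b => w ^ b.val * (x (k - b) : ℂ))]
    simp only [Equiv.subLeft_apply, sub_sub_cancel]
    rw [hX_def, Finset.mul_sum]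
    exact Finset.sum_congr rfl fun ℓ _ => by rw [hGsub]; ring
  have expand : ∀ a b : ZMod L,
      Complex.exp (-2 * Real.pi * Complex.I * ((i.val : ℂ) * (a.val : ℂ)) / L)
        * ((M2 x p q a b : ℝ) : ℂ)
        * Complex.exp (2 * Real.pi * Complex.I * ((i.val : ℂ) * (b.val : ℂ)) / L)
      = (∑ k : ZMod L, (p k : ℂ) * ((v ^ a.val * (x (a - k) : ℂ)) * (w ^ b.val * (x (b - k) : ℂ))))
        + ∑ k : ZMod L, (q k : ℂ) * ((v ^ a.val * (x (k - a) : ℂ)) * (w ^ b.val * (x (k - b) : ℂ))) := by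
    intro a b
    rw [hF, hG]
    show v ^ a.val * ((M2 x p q a b : ℝ) : ℂ) * w ^ b.val = _
    rw [M2, Matrix.of_apply]
    push_cast
    simp only [mul_add, add_mul, Finset.mul_sum, Finset.sum_mul]
    congr 1 <;> exact Finset.sum_congr rfl fun k _ => by ring
  calc (∑ a : ZMod L, ∑ b : ZMod L,
        Complex.exp (-2 * Real.pi * Complex.I * ((i.val : ℂ) * (a.val : ℂ)) / (L : ℂ))
          * (M2 x p q a b : ℂ)
          * Complex.exp (2 * Real.pi * Complex.I * ((i.val : ℂ) * (b.val : ℂ)) / (L : ℂ)))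
      = (∑ a : ZMod L, ∑ b : ZMod L, ∑ k : ZMod L,
          (p k : ℂ) * ((v ^ a.val * (x (a - k) : ℂ)) * (w ^ b.val * (x (b - k) : ℂ))))
        + ∑ a : ZMod L, ∑ b : ZMod L, ∑ k : ZMod L,
          (q k : ℂ) * ((v ^ a.val * (x (k - a) : ℂ)) * (w ^ b.val * (x (k - b) : ℂ))) := by
        rw [← Finset.sum_add_distrib]
        refine Finset.sum_congr rfl fun a _ => ?_
        rw [← Finset.sum_add_distrib]
        exact Finset.sum_congr rfl fun b _ => expand a b
    _ = (∑ k : ZMod L, ∑ a : ZMod L, ∑ b : ZMod L,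
          (p k : ℂ) * ((v ^ a.val * (x (a - k) : ℂ)) * (w ^ b.val * (x (b - k) : ℂ))))
        + ∑ k : ZMod L, ∑ a : ZMod L, ∑ b : ZMod L,
          (q k : ℂ) * ((v ^ a.val * (x (k - a) : ℂ)) * (w ^ b.val * (x (k - b) : ℂ))) := by
        congr 1
        · exact triple_sum_comm _
        · exact triple_sum_comm _
    _ = (∑ k : ZMod L, (p k : ℂ) * ((v ^ k.val * X) * (w ^ k.val * Y)))
        + ∑ k : ZMod L, (q k : ℂ) * ((v ^ k.val * Y) * (w ^ k.val * X)) := by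
        congr 1
        · refine Finset.sum_congr rfl fun k _ => ?_
          rw [double_sum_factor ((p k : ℂ)) (fun a => v ^ a.val * (x (a - k) : ℂ))
            (fun b => w ^ b.val * (x (b - k) : ℂ)), hA, hB]
        · refine Finset.sum_congr rfl fun k _ => ?_
          rw [double_sum_factor ((q k : ℂ)) (fun a => v ^ a.val * (x (k - a) : ℂ))
            (fun b => w ^ b.val * (x (k - b) : ℂ)), hC, hD]
    _ = (∑ k : ZMod L, (p k : ℂ) * (X * Y)) + ∑ k : ZMod L, (q k : ℂ) * (X * Y) := by
        congr 1
        · refine Finset.sum_congr rfl fun k _ => ?_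
          calc (p k : ℂ) * ((v ^ k.val * X) * (w ^ k.val * Y))
              = (p k : ℂ) * (X * Y) * (v ^ k.val * w ^ k.val) := by ring
            _ = (p k : ℂ) * (X * Y) := by rw [hFG, mul_one]
        · refine Finset.sum_congr rfl fun k _ => ?_
          calc (q k : ℂ) * ((v ^ k.val * Y) * (w ^ k.val * X))
              = (q k : ℂ) * (X * Y) * (v ^ k.val * w ^ k.val) := by ring
            _ = (q k : ℂ) * (X * Y) := by rw [hFG, mul_one]
    _ = X * Y := by
        have h1 : ((∑ k : ZMod L, (p k : ℂ)) + ∑ k : ZMod L, (q k : ℂ)) = 1 := by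
          rw [← Complex.ofReal_sum, ← Complex.ofReal_sum, ← Complex.ofReal_add, hsum,
            Complex.ofReal_one]
        rw [← Finset.sum_mul, ← Finset.sum_mul, ← add_mul, h1, one_mul]
    _ = ((‖dftR x i‖ ^ 2 : ℝ) : ℂ) := by
        have hconj : (starRingEnd ℂ) v = w := by
          rw [hv_def, hw_def, ← Complex.exp_conj]
          congr 1
          simp only [map_div₀, map_mul, map_neg, Complex.conj_I, Complex.conj_ofReal,
            map_ofNat, Complex.conj_natCast]
          ring
        have hY : Y = (starRingEnd ℂ) X := by
          rw [hX_def, hY_def, map_sum]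
          refine Finset.sum_congr rfl fun ℓ _ => ?_
          rw [map_mul, map_pow, hconj, Complex.conj_ofReal]
        rw [hX, hY, Complex.mul_conj, Complex.sq_norm]
end

section
/- Let z₁, z₂, z_{n−1}, z_n be nonzero complex numbers and A, B, C, D, E, F complex numbers. Define α = B·z₁·z₂ − A·z₁³, β = C·z_n·(z₁⁴ − z₂²), γ = A·z₁·z₂²·z_n² − B·z₁³·z₂·z_n², α' = E·z₁·z_n − F·z₂·z_{n−1}, β' = D·(z₂²·z_{n−1}² − z₁²·z_n²), γ' = F·z₁²·z₂·z_{n−1}·z_n² − E·z₁·z₂²·z_{n−1}²·z_n, and assume α·β' − α'·β ≠ 0. Suppose w and w' are nonzero complex numbers such that: there exist u, v, u', v' ∈ ℂ with A = u·z₁ + v/z₁, B = u·z₂/z₁ + v·z₁/z₂, C = u·w/z_n + v·z_n/w, D = u'·w + v'/w, E = u'·z₁·z_n + v'/(z₁·z_n), F = u'·z₂·z_{n−1} + v'/(z₂·z_{n−1}); and there exist ũ, ṽ, ũ', ṽ' ∈ ℂ satisfying the same six equations with w replaced by w'. Then w = w'. Moreover, w·(α·β' − α'·β) = α'·γ − α·γ'.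 -/
/-- the Fourier coefficient `z_{n+1} = w` is uniquely determined as a common
root of the two quadratic consistency equations, under the nondegeneracy condition
`α·β' − α'·β ≠ 0`; moreover `w·(α·β' − α'·β) = α'·γ − α·γ'`. -/
theorem dihedral_mra_znplusone_unique (z₁ z₂ zprev zₙ A B C D E F α β γ α' β' γ' w w' : ℂ)
    (hz₁ : z₁ ≠ 0) (hz₂ : z₂ ≠ 0) (hzprev : zprev ≠ 0) (hzₙ : zₙ ≠ 0)
    (hα : α = B * z₁ * z₂ - A * z₁ ^ 3)
    (hβ : β = C * zₙ * (z₁ ^ 4 - z₂ ^ 2))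
    (hγ : γ = A * z₁ * z₂ ^ 2 * zₙ ^ 2 - B * z₁ ^ 3 * z₂ * zₙ ^ 2)
    (hα' : α' = E * z₁ * zₙ - F * z₂ * zprev)
    (hβ' : β' = D * (z₂ ^ 2 * zprev ^ 2 - z₁ ^ 2 * zₙ ^ 2))
    (hγ' : γ' = F * z₁ ^ 2 * z₂ * zprev * zₙ ^ 2 - E * z₁ * z₂ ^ 2 * zprev ^ 2 * zₙ)
    (hnd : α * β' - α' * β ≠ 0)
    (hw : w ≠ 0) (hw' : w' ≠ 0)
    (hsys : ∃ u v u' v' : ℂ,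
      A = u * z₁ + v / z₁ ∧
      B = u * z₂ / z₁ + v * z₁ / z₂ ∧
      C = u * w / zₙ + v * zₙ / w ∧
      D = u' * w + v' / w ∧
      E = u' * z₁ * zₙ + v' / (z₁ * zₙ) ∧
      F = u' * z₂ * zprev + v' / (z₂ * zprev))
    (hsys' : ∃ u v u' v' : ℂ,
      A = u * z₁ + v / z₁ ∧
      B = u * z₂ / z₁ + v * z₁ / z₂ ∧
      C = u * w' / zₙ + v * zₙ / w' ∧
      D = u' * w' + v' / w' ∧
      E = u' * z₁ * zₙ + v' / (z₁ * zₙ) ∧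
      F = u' * z₂ * zprev + v' / (z₂ * zprev)) :
    w = w' ∧ w * (α * β' - α' * β) = α' * γ - α * γ' := by
  subst hα hβ hγ hα' hβ' hγ'
  have quad : ∀ W : ℂ, W ≠ 0 →
      (∃ u v u' v' : ℂ,
        A = u * z₁ + v / z₁ ∧
        B = u * z₂ / z₁ + v * z₁ / z₂ ∧
        C = u * W / zₙ + v * zₙ / W ∧
        D = u' * W + v' / W ∧
        E = u' * z₁ * zₙ + v' / (z₁ * zₙ) ∧
        F = u' * z₂ * zprev + v' / (z₂ * zprev)) →
      (B * z₁ * z₂ - A * z₁ ^ 3) * W ^ 2 + (C * zₙ * (z₁ ^ 4 - z₂ ^ 2)) * W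
        + (A * z₁ * z₂ ^ 2 * zₙ ^ 2 - B * z₁ ^ 3 * z₂ * zₙ ^ 2) = 0 ∧
      (E * z₁ * zₙ - F * z₂ * zprev) * W ^ 2
        + (D * (z₂ ^ 2 * zprev ^ 2 - z₁ ^ 2 * zₙ ^ 2)) * W
        + (F * z₁ ^ 2 * z₂ * zprev * zₙ ^ 2 - E * z₁ * z₂ ^ 2 * zprev ^ 2 * zₙ) = 0 := by
    rintro W hW ⟨u, v, u', v', hA, hB, hC, hD, hE, hF⟩
    subst hA hB hC hD hE hF
    constructor <;> field_simp <;> ring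
  obtain ⟨q1, q2⟩ := quad w hw hsys
  obtain ⟨q1', q2'⟩ := quad w' hw' hsys'
  have lin : w * ((B * z₁ * z₂ - A * z₁ ^ 3) * (D * (z₂ ^ 2 * zprev ^ 2 - z₁ ^ 2 * zₙ ^ 2))
      - (E * z₁ * zₙ - F * z₂ * zprev) * (C * zₙ * (z₁ ^ 4 - z₂ ^ 2)))
      = (E * z₁ * zₙ - F * z₂ * zprev) * (A * z₁ * z₂ ^ 2 * zₙ ^ 2 - B * z₁ ^ 3 * z₂ * zₙ ^ 2)
      - (B * z₁ * z₂ - A * z₁ ^ 3) * (F * z₁ ^ 2 * z₂ * zprev * zₙ ^ 2 - E * z₁ * z₂ ^ 2 * zprev ^ 2 * zₙ) := by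
    linear_combination (B * z₁ * z₂ - A * z₁ ^ 3) * q2 - (E * z₁ * zₙ - F * z₂ * zprev) * q1
  have lin' : w' * ((B * z₁ * z₂ - A * z₁ ^ 3) * (D * (z₂ ^ 2 * zprev ^ 2 - z₁ ^ 2 * zₙ ^ 2))
      - (E * z₁ * zₙ - F * z₂ * zprev) * (C * zₙ * (z₁ ^ 4 - z₂ ^ 2)))
      = (E * z₁ * zₙ - F * z₂ * zprev) * (A * z₁ * z₂ ^ 2 * zₙ ^ 2 - B * z₁ ^ 3 * z₂ * zₙ ^ 2)
      - (B * z₁ * z₂ - A * z₁ ^ 3) * (F * z₁ ^ 2 * z₂ * zprev * zₙ ^ 2 - E * z₁ * z₂ ^ 2 * zprev ^ 2 * zₙ) := by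
    linear_combination (B * z₁ * z₂ - A * z₁ ^ 3) * q2' - (E * z₁ * zₙ - F * z₂ * zprev) * q1'
  refine ⟨?_, lin⟩
  have := lin.trans lin'.symm
  exact mul_right_cancel₀ hnd this
end

section
/- Let A₀, A₁, A₂, z₁, z₂ be complex numbers with |z₁| = 1 and |z₂| = 1, and suppose A₀·z₁⁸ + A₁·z₁⁶·z₂ + A₂·z₁⁴·z₂² + A₁·z₁²·z₂³ + A₀·z₂⁴ = 0. Then B₁·z₁⁴ + B₂·z₁²·z₂ + B₁·z₂² = 0, where B₁ and B₂ are the real numbers B₁ = 2·Im(conj(A₀)·A₁) and B₂ = 2·Im(conj(A₀)·A₂) (regarded as complex numbers in the displayed equation). -/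
/-- from the palindromic quartic in unit-modulus `z₁, z₂` one derives the
real-coefficient quadratic `B₁·z₁⁴ + B₂·z₁²·z₂ + B₁·z₂² = 0` with
`B₁ = 2·Im(conj(A₀)·A₁)` and `B₂ = 2·Im(conj(A₀)·A₂)`. -/
theorem dihedral_mra_palindromic_real_quadratic (A₀ A₁ A₂ z₁ z₂ : ℂ)
    (hz₁ : ‖z₁‖ = 1) (hz₂ : ‖z₂‖ = 1)
    (h : A₀ * z₁ ^ 8 + A₁ * z₁ ^ 6 * z₂ + A₂ * z₁ ^ 4 * z₂ ^ 2
        + A₁ * z₁ ^ 2 * z₂ ^ 3 + A₀ * z₂ ^ 4 = 0) :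
    ((2 * ((starRingEnd ℂ) A₀ * A₁).im : ℝ) : ℂ) * z₁ ^ 4
      + ((2 * ((starRingEnd ℂ) A₀ * A₂).im : ℝ) : ℂ) * z₁ ^ 2 * z₂
      + ((2 * ((starRingEnd ℂ) A₀ * A₁).im : ℝ) : ℂ) * z₂ ^ 2 = 0 := by
  have hn1 : z₁ ≠ 0 := by intro hz; simp [hz] at hz₁
  have hn2 : z₂ ≠ 0 := by intro hz; simp [hz] at hz₂
  set w₁ := (starRingEnd ℂ) z₁ with hw₁
  set w₂ := (starRingEnd ℂ) z₂ with hw₂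
  have u1 : z₁ * w₁ = 1 := by
    rw [hw₁, Complex.mul_conj]; norm_cast
    simp [Complex.normSq_eq_norm_sq, hz₁]
  have u2 : z₂ * w₂ = 1 := by
    rw [hw₂, Complex.mul_conj]; norm_cast
    simp [Complex.normSq_eq_norm_sq, hz₂]
  have k1 : z₁ ^ 8 * w₁ ^ 8 = 1 := by
    rw [show z₁ ^ 8 * w₁ ^ 8 = (z₁ * w₁) ^ 8 by ring, u1, one_pow]
  have k2 : z₁ ^ 6 * w₁ ^ 6 * (z₂ * w₂) = 1 := by
    rw [show z₁ ^ 6 * w₁ ^ 6 * (z₂ * w₂) = (z₁ * w₁) ^ 6 * (z₂ * w₂) by ring, u1, u2,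
      one_pow, one_mul]
  have k3 : z₁ ^ 4 * w₁ ^ 4 * (z₂ ^ 2 * w₂ ^ 2) = 1 := by
    rw [show z₁ ^ 4 * w₁ ^ 4 * (z₂ ^ 2 * w₂ ^ 2) = (z₁ * w₁) ^ 4 * (z₂ * w₂) ^ 2 by ring,
      u1, u2, one_pow, one_pow, one_mul]
  have k4 : z₁ ^ 2 * w₁ ^ 2 * (z₂ ^ 3 * w₂ ^ 3) = 1 := by
    rw [show z₁ ^ 2 * w₁ ^ 2 * (z₂ ^ 3 * w₂ ^ 3) = (z₁ * w₁) ^ 2 * (z₂ * w₂) ^ 3 by ring,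
      u1, u2, one_pow, one_pow, one_mul]
  have k5 : z₂ ^ 4 * w₂ ^ 4 = 1 := by
    rw [show z₂ ^ 4 * w₂ ^ 4 = (z₂ * w₂) ^ 4 by ring, u2, one_pow]
  have hc := congrArg (starRingEnd ℂ) h
  simp only [map_add, map_mul, map_pow, map_zero, ← hw₁, ← hw₂] at hc
  have h2 : (starRingEnd ℂ) A₀ * z₂ ^ 4 + (starRingEnd ℂ) A₁ * z₁ ^ 2 * z₂ ^ 3
      + (starRingEnd ℂ) A₂ * z₁ ^ 4 * z₂ ^ 2 + (starRingEnd ℂ) A₁ * z₁ ^ 6 * z₂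
      + (starRingEnd ℂ) A₀ * z₁ ^ 8 = 0 := by
    linear_combination z₁ ^ 8 * z₂ ^ 4 * hc - (starRingEnd ℂ) A₀ * z₂ ^ 4 * k1
      - (starRingEnd ℂ) A₁ * z₁ ^ 2 * z₂ ^ 3 * k2
      - (starRingEnd ℂ) A₂ * z₁ ^ 4 * z₂ ^ 2 * k3
      - (starRingEnd ℂ) A₁ * z₁ ^ 6 * z₂ * k4
      - (starRingEnd ℂ) A₀ * z₁ ^ 8 * k5
  have e1 : ((2 * ((starRingEnd ℂ) A₀ * A₁).im : ℝ) : ℂ) * Complex.I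
      = (starRingEnd ℂ) A₀ * A₁ - A₀ * (starRingEnd ℂ) A₁ := by
    have hs := Complex.sub_conj ((starRingEnd ℂ) A₀ * A₁)
    rw [map_mul, Complex.conj_conj] at hs
    push_cast at hs ⊢
    linear_combination -hs
  have e2 : ((2 * ((starRingEnd ℂ) A₀ * A₂).im : ℝ) : ℂ) * Complex.I
      = (starRingEnd ℂ) A₀ * A₂ - A₀ * (starRingEnd ℂ) A₂ := by
    have hs := Complex.sub_conj ((starRingEnd ℂ) A₀ * A₂)
    rw [map_mul, Complex.conj_conj] at hs
    push_cast at hs ⊢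
    linear_combination -hs
  have hI : Complex.I * z₁ ^ 2 * z₂ ≠ 0 := by
    simp [Complex.I_ne_zero, hn1, hn2]
  have hk : (Complex.I * z₁ ^ 2 * z₂) *
      (((2 * ((starRingEnd ℂ) A₀ * A₁).im : ℝ) : ℂ) * z₁ ^ 4
        + ((2 * ((starRingEnd ℂ) A₀ * A₂).im : ℝ) : ℂ) * z₁ ^ 2 * z₂
        + ((2 * ((starRingEnd ℂ) A₀ * A₁).im : ℝ) : ℂ) * z₂ ^ 2) = 0 := by
    linear_combination (z₁ ^ 6 * z₂ + z₁ ^ 2 * z₂ ^ 3) * e1 + z₁ ^ 4 * z₂ ^ 2 * e2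
      + (starRingEnd ℂ) A₀ * h - A₀ * h2
  exact (mul_eq_zero.mp hk).resolve_left hI
end

section
/- Let L be a positive integer and λ ∈ ℂ with λ^L = 1. Let z, p, q : ZMod L → ℂ with z[k] ≠ 0 for all k, and let M : ZMod L → ZMod L → ℂ. Suppose that for all i, j ∈ ZMod L: p[i+j]·z[i]·z[j] + q[−(i+j)] / (z[i]·z[j]) = M[i,j]. Define z'[k] = λ^{k.val}·z[k], p'[k] = λ^{−k.val}·p[k], and q'[k] = λ^{−k.val}·q[k] (these are well defined since λ^L = 1). Then for all i, j ∈ ZMod L: p'[i+j]·z'[i]·z'[j] + q'[−(i+j)] / (z'[i]·z'[j]) = M[i,j]. -/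
/-- weighted-homogeneity (scaling invariance) of the second-moment equation
system in the Fourier domain: rescaling `z[k] ↦ λ^k z[k]`, `p[k] ↦ λ^{-k} p[k]`,
`q[k] ↦ λ^{-k} q[k]` for an `L`-th root of unity `λ` preserves the moment values. -/
theorem dihedral_mra_scaling_invariance (L : ℕ) [NeZero L] (lam : ℂ) (hlam : lam ^ L = 1)
    (z p q : ZMod L → ℂ) (hz : ∀ k, z k ≠ 0) (M : ZMod L → ZMod L → ℂ)
    (h : ∀ i j : ZMod L,
      p (i + j) * z i * z j + q (-(i + j)) / (z i * z j) = M i j) :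
    ∀ i j : ZMod L,
      (lam⁻¹ ^ (i + j).val * p (i + j)) * (lam ^ i.val * z i) * (lam ^ j.val * z j)
        + (lam⁻¹ ^ (-(i + j)).val * q (-(i + j)))
            / ((lam ^ i.val * z i) * (lam ^ j.val * z j)) = M i j := by
  have hl0 : lam ≠ 0 := by
    intro h0
    rw [h0, zero_pow (NeZero.ne L)] at hlam
    exact zero_ne_one hlam
  have key : ∀ n : ℕ, lam ^ n = lam ^ (n % L) := by
    intro n
    conv_lhs => rw [← Nat.mod_add_div n L]
    rw [pow_add, pow_mul, hlam, one_pow, mul_one]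
  have hadd : ∀ a b : ZMod L, lam ^ (a + b).val = lam ^ a.val * lam ^ b.val := by
    intro a b
    rw [ZMod.val_add, ← key, ← pow_add]
  have hneg : ∀ a : ZMod L, lam ^ (-a).val * lam ^ a.val = 1 := by
    intro a
    rw [← pow_add, key, ← ZMod.val_add, neg_add_cancel, ZMod.val_zero, pow_zero]
  intro i j
  have hij : lam ^ (i + j).val = lam ^ i.val * lam ^ j.val := hadd i j
  have hne : lam ^ i.val * lam ^ j.val ≠ 0 :=
    mul_ne_zero (pow_ne_zero _ hl0) (pow_ne_zero _ hl0)
  have e1 : lam⁻¹ ^ (i + j).val * (lam ^ i.val * lam ^ j.val) = 1 := by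
    rw [inv_pow, ← hij]
    exact inv_mul_cancel₀ (pow_ne_zero _ hl0)
  have e2 : lam⁻¹ ^ (-(i + j)).val = lam ^ i.val * lam ^ j.val := by
    rw [inv_pow]
    refine inv_eq_of_mul_eq_one_right ?_
    rw [← hij]; exact hneg (i + j)
  calc (lam⁻¹ ^ (i + j).val * p (i + j)) * (lam ^ i.val * z i) * (lam ^ j.val * z j)
        + (lam⁻¹ ^ (-(i + j)).val * q (-(i + j)))
            / ((lam ^ i.val * z i) * (lam ^ j.val * z j))
      = (lam⁻¹ ^ (i + j).val * (lam ^ i.val * lam ^ j.val)) * (p (i + j) * z i * z j)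
        + ((lam ^ i.val * lam ^ j.val) * q (-(i + j)))
            / ((lam ^ i.val * lam ^ j.val) * (z i * z j)) := by
        rw [e2]; ring_nf
    _ = p (i + j) * z i * z j + q (-(i + j)) / (z i * z j) := by
        rw [e1, one_mul, mul_div_mul_left _ _ hne]
    _ = M i j := h i j
end
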